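/- For a group Γ, the following are equivalent for the left-right action of Γ × Γ on Γ: (a) for every element (g,h) ≠ (e,e) of Γ × Γ, the fixed-point set Fix(g,h) = {x ∈ Γ : g x h⁻¹ = x} has infinite index in Γ (i.e., Γ is not a finite union of Γ×Γ-translates of Fix(g,h)); (b) Γ is ICC, i.e., every nontrivial conjugacy class of Γ is infinite. -/

import Mathlib

open Pointwise

/-- The left-right action of `Γ × Γ` on `Γ`: `(g, h) • x = g * x * h⁻¹`. -/
instance leftRightAction (Γ : Type*) [Group Γ] : MulAction (Γ × Γ) Γ where
  smul := fun p x => p.1 * x * p.2⁻¹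
  one_smul := fun x => by
    show (1 : Γ) * x * (1 : Γ)⁻¹ = x
    simp
  mul_smul := fun p q x => by
    show (p.1 * q.1) * x * (p.2 * q.2)⁻¹ = p.1 * (q.1 * x * q.2⁻¹) * p.2⁻¹
    group

/-- For the left-right action of `Γ × Γ` on `Γ`, the fixed-point set of every nontrivial
element has infinite index (`Γ` is not covered by finitely many translates) if and only if
`Γ` is ICC (every nontrivial conjugacy class is infinite). -/

lemma index_comap_surj {Γ' Γ : Type*} [Group Γ'] [Group Γ] (f : Γ' →* Γ)
    (hf : Function.Surjective f) (H : Subgroup Γ) :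
    (H.comap f).index = H.index := by
  rw [Subgroup.index_comap, MonoidHom.range_eq_top_of_surjective _ hf,
    Subgroup.relIndex_top_right]

lemma index_map_equiv {Γ : Type*} [Group Γ] (e : Γ ≃* Γ) (H : Subgroup Γ) :
    (H.map (e : Γ →* Γ)).index = H.index := by
  rw [Subgroup.map_equiv_eq_comap_symm, index_comap_surj _ e.symm.surjective]

lemma centralizer_index_eq {Γ : Type*} [Group Γ] (g : Γ) :
    (Subgroup.centralizer {g}).index = {x : Γ | ∃ a : Γ, a * g * a⁻¹ = x}.ncard := by
  rw [show Subgroup.centralizer {g} = Subgroup.comap (ConjAct.toConjAct : Γ ≃* ConjAct Γ).toMonoidHom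
      (MulAction.stabilizer (ConjAct Γ) g) from Subgroup.centralizer_eq_comap_stabilizer g,
    index_comap_surj _ ConjAct.toConjAct.surjective,
    MulAction.index_stabilizer]
  congr 1

theorem fix_infinite_index_iff_ICC (Γ : Type*) [Group Γ] :
    (∀ p : Γ × Γ, p ≠ 1 →
      ∀ (n : ℕ) (t : Fin n → Γ × Γ),
        (⋃ k : Fin n, t k • {x : Γ | p.1 * x * p.2⁻¹ = x}) ≠ Set.univ) ↔
    (∀ h : Γ, h ≠ 1 → {x : Γ | ∃ g : Γ, g * h * g⁻¹ = x}.Infinite) := by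
  constructor
  · intro H h hne
    by_contra hfin
    rw [Set.not_infinite] at hfin
    -- the centralizer has finite index
    have hne0 : (Subgroup.centralizer {h}).index ≠ 0 := by
      rw [centralizer_index_eq]
      intro h0
      rw [Set.ncard_eq_zero hfin] at h0
      exact absurd h0 (Set.nonempty_iff_ne_empty.mp ⟨h, 1, by group⟩)
    haveI hFI : (Subgroup.centralizer {h}).FiniteIndex := ⟨hne0⟩
    have : Finite (Γ ⧸ Subgroup.centralizer {h}) := inferInstance
    obtain ⟨n, ⟨e⟩⟩ := Finite.exists_equiv_fin (Γ ⧸ Subgroup.centralizer {h})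
    refine H (h, h) (by simp [Prod.ext_iff, hne]) n
      (fun k => (Quotient.out (e.symm k), 1)) ?_
    apply Set.eq_univ_of_forall
    intro x
    refine Set.mem_iUnion.mpr ⟨e (x : Γ ⧸ Subgroup.centralizer {h}), ?_⟩
    rw [Set.mem_smul_set]
    set q : Γ ⧸ Subgroup.centralizer {h} := (x : Γ ⧸ Subgroup.centralizer {h})
    refine ⟨(Quotient.out q)⁻¹ * x, ?_, ?_⟩
    · have hm : (Quotient.out q)⁻¹ * x ∈ Subgroup.centralizer {h} := by
        rw [← QuotientGroup.eq]
        exact Quotient.out_eq q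
      have := Subgroup.mem_centralizer_iff.mp hm h rfl
      show h * ((Quotient.out q)⁻¹ * x) * h⁻¹ = (Quotient.out q)⁻¹ * x
      rw [this]; group
    · show Quotient.out (e.symm (e q)) * ((Quotient.out q)⁻¹ * x) * (1:Γ)⁻¹ = x
      rw [e.symm_apply_apply]; group
  · intro hicc p hp n t hcov
    -- the fixed set is nonempty
    have h1 : (1:Γ) ∈ ⋃ k : Fin n, t k • {x : Γ | p.1 * x * p.2⁻¹ = x} := hcov ▸ Set.mem_univ 1
    obtain ⟨k₀, hk₀⟩ := Set.mem_iUnion.mp h1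
    obtain ⟨x₀, hx₀, -⟩ := Set.mem_smul_set.mp hk₀
    have hx₀' : p.1 * x₀ * p.2⁻¹ = x₀ := hx₀
    -- rewrite each translate as a left coset of a conjugate of the centralizer
    have hrel : p.2 = x₀⁻¹ * (p.1 * x₀) := by
      have h2 := hx₀'
      rw [mul_inv_eq_iff_eq_mul] at h2
      rw [h2]; group
    set C := Subgroup.centralizer {p.1} with hC
    have key : ∀ k : Fin n, t k • {x : Γ | p.1 * x * p.2⁻¹ = x} =
        ((t k).1 * x₀ * (t k).2⁻¹) •
          ((C.map (MulAut.conj ((t k).2 * x₀⁻¹) : Γ →* Γ) : Subgroup Γ) : Set Γ) := by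
      intro k
      ext y
      rw [Set.mem_smul_set, mem_leftCoset_iff]
      constructor
      · rintro ⟨x, hx, rfl⟩
        have hx' : p.1 * x * p.2⁻¹ = x := hx
        have hc : x * x₀⁻¹ ∈ C := by
          rw [hC, Subgroup.mem_centralizer_iff]
          rintro m rfl
          calc p.1 * (x * x₀⁻¹) = (p.1 * x * p.2⁻¹) * (p.2 * x₀⁻¹) := by group
            _ = x * (x₀⁻¹ * (p.1 * x₀)) * x₀⁻¹ := by rw [hx', ← hrel]; group
            _ = x * x₀⁻¹ * p.1 := by group
        refine Subgroup.mem_map.mpr ⟨x * x₀⁻¹, hc, ?_⟩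
        show (t k).2 * x₀⁻¹ * (x * x₀⁻¹) * ((t k).2 * x₀⁻¹)⁻¹ =
          ((t k).1 * x₀ * (t k).2⁻¹)⁻¹ * ((t k).1 * x * (t k).2⁻¹)
        group
      · intro hy
        obtain ⟨c, hc, hcy⟩ := Subgroup.mem_map.mp hy
        refine ⟨c * x₀, ?_, ?_⟩
        · have := Subgroup.mem_centralizer_iff.mp hc p.1 rfl
          show p.1 * (c * x₀) * p.2⁻¹ = c * x₀
          calc p.1 * (c * x₀) * p.2⁻¹ = c * (p.1 * x₀ * p.2⁻¹) := by
                rw [← mul_assoc, ← mul_assoc, this]; group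
            _ = c * x₀ := by rw [hx₀']
        · have hcy' : (t k).2 * x₀⁻¹ * c * ((t k).2 * x₀⁻¹)⁻¹ =
              ((t k).1 * x₀ * (t k).2⁻¹)⁻¹ * y := by
            rw [← hcy]; rfl
          show (t k).1 * (c * x₀) * (t k).2⁻¹ = y
          have : y = ((t k).1 * x₀ * (t k).2⁻¹) * ((t k).2 * x₀⁻¹ * c * ((t k).2 * x₀⁻¹)⁻¹) := by
            rw [hcy']; group
          rw [this]; group
    -- apply B. H. Neumann's lemma
    simp_rw [key] at hcov
    have hcov' : ⋃ k ∈ (Finset.univ : Finset (Fin n)), ((t k).1 * x₀ * (t k).2⁻¹) •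
        ((C.map (MulAut.conj ((t k).2 * x₀⁻¹) : Γ →* Γ) : Subgroup Γ) : Set Γ) = Set.univ := by
      simpa using hcov
    obtain ⟨k, -, hfi⟩ := Subgroup.exists_finiteIndex_of_leftCoset_cover hcov'
    have hCfi : C.index ≠ 0 := by
      have := hfi.index_ne_zero
      rwa [show (MulAut.conj ((t k).2 * x₀⁻¹) : Γ →* Γ) =
          ((MulAut.conj ((t k).2 * x₀⁻¹) : Γ ≃* Γ) : Γ →* Γ) from rfl,
        index_map_equiv] at this
    -- conclude p.1 = 1, hence p = 1
    have hp1 : p.1 = 1 := by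
      by_contra hne
      have := (hicc p.1 hne).ncard
      rw [← centralizer_index_eq] at this
      exact hCfi this
    have hp2 : p.2 = 1 := by
      rw [hrel, hp1]; group
    exact hp (Prod.ext hp1 hp2)
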